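/- Let l > 0 be a real number and let T_l : ℍ → ℍ be the glide reflection T_l(z) = e^l · (−conj(z)) of the upper half-plane. Then for every z ∈ ℍ, the hyperbolic displacement satisfies dist(z, T_l z) ≥ l, and equality dist(z, T_l z) = l holds if and only if Re z = 0. In other words, the displacement function of T_l attains its minimum value l exactly on the imaginary axis. -/

import Mathlib

open UpperHalfPlane Complex

/-- The glide reflection `z ↦ e^l · (−conj z)` of the upper half-plane. -/
noncomputable def glide (l : ℝ) (z : ℍ) : ℍ :=
  UpperHalfPlane.mk (Real.exp l * (-(starRingEnd ℂ) (z : ℂ)))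
    (by
      simp only [Complex.mul_im, Complex.neg_im, Complex.neg_re, Complex.conj_im,
        Complex.conj_re, Complex.ofReal_re, Complex.ofReal_im, neg_neg, zero_mul,
        mul_zero, add_zero, zero_add, neg_zero]
      exact mul_pos (Real.exp_pos l) z.im_pos)

/-- For `l > 0`, the hyperbolic displacement of the glide reflection `T_l` is at least
`l` everywhere, with equality exactly on the imaginary axis. -/
theorem glide_displacement_min (l : ℝ) (hl : 0 < l) :
    ∀ z : ℍ, l ≤ dist z (glide l z) ∧ (dist z (glide l z) = l ↔ z.re = 0) := by
  intro z
  set E := Real.exp l with hE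
  have hE1 : 1 < E := Real.one_lt_exp_iff.2 hl
  have hy : 0 < z.im := z.im_pos
  set x := z.re with hx
  set y := z.im with hyy
  have him : (glide l z).im = E * y := by
    simp only [UpperHalfPlane.im, glide, UpperHalfPlane.coe_mk, Complex.mul_im,
      Complex.neg_im, Complex.neg_re, Complex.conj_im, Complex.conj_re,
      Complex.ofReal_re, Complex.ofReal_im, neg_neg, zero_mul, mul_zero,
      add_zero, zero_add, neg_zero]
    rfl
  have habs : dist (z : ℂ) ((glide l z : ℂ)) =
      Real.sqrt ((1 + E) ^ 2 * x ^ 2 + (E - 1) ^ 2 * y ^ 2) := by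
    rw [Complex.dist_eq, Complex.norm_def, Complex.normSq_apply]
    have hre : ((z : ℂ) - (glide l z : ℂ)).re = (1 + E) * x := by
      simp only [glide, UpperHalfPlane.coe_mk, Complex.sub_re, Complex.mul_re,
        Complex.neg_re, Complex.neg_im, Complex.conj_re, Complex.conj_im,
        Complex.ofReal_re, Complex.ofReal_im, neg_neg, zero_mul, mul_zero, sub_zero]
      rw [← hE, UpperHalfPlane.coe_re]
      ring
    have hi : ((z : ℂ) - (glide l z : ℂ)).im = (1 - E) * y := by
      simp only [glide, UpperHalfPlane.coe_mk, Complex.sub_im, Complex.mul_im,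
        Complex.neg_re, Complex.neg_im, Complex.conj_re, Complex.conj_im,
        Complex.ofReal_re, Complex.ofReal_im, neg_neg, zero_mul, mul_zero, add_zero,
        zero_add, neg_zero]
      rw [← hE, UpperHalfPlane.coe_im]
      ring
    rw [hre, hi]
    congr 1
    ring
  have hsq : Real.sqrt (z.im * (glide l z).im) = Real.sqrt E * y := by
    rw [him, show y * (E * y) = E * y ^ 2 by ring, Real.sqrt_mul (by positivity),
      Real.sqrt_sq hy.le]
  have hdist : dist z (glide l z) =
      2 * Real.arsinh (Real.sqrt ((1 + E) ^ 2 * x ^ 2 + (E - 1) ^ 2 * y ^ 2)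
        / (2 * (Real.sqrt E * y))) := by
    rw [UpperHalfPlane.dist_eq, habs, hsq]
  have hsE : 0 < Real.sqrt E := Real.sqrt_pos.2 (by linarith)
  have hl2 : l = 2 * Real.arsinh (((E - 1) * y) / (2 * (Real.sqrt E * y))) := by
    have hexp : Real.exp (l / 2) = Real.sqrt E := by
      rw [show E = Real.exp (l / 2) ^ 2 by rw [sq, ← Real.exp_add, hE]; ring_nf,
        Real.sqrt_sq (Real.exp_pos _).le]
    have hs : ((E - 1) * y) / (2 * (Real.sqrt E * y)) = Real.sinh (l / 2) := by
      rw [Real.sinh_eq, Real.exp_neg, hexp]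
      have hEs : Real.sqrt E ^ 2 = E := Real.sq_sqrt (by linarith)
      field_simp
      nlinarith [hEs]
    rw [hs, Real.arsinh_sinh]; ring
  have hEy : 0 ≤ (E - 1) * y := mul_nonneg (by linarith) hy.le
  have hkey1 : (E - 1) * y ≤ Real.sqrt ((1 + E) ^ 2 * x ^ 2 + (E - 1) ^ 2 * y ^ 2) := by
    rw [show (E - 1) * y = Real.sqrt (((E - 1) * y) ^ 2) from
      (Real.sqrt_sq hEy).symm]
    apply Real.sqrt_le_sqrt; nlinarith [sq_nonneg ((1 + E) * x)]
  have hkey2 : Real.sqrt ((1 + E) ^ 2 * x ^ 2 + (E - 1) ^ 2 * y ^ 2) = (E - 1) * y ↔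
      x = 0 := by
    constructor
    · intro h
      have h2 := congrArg (· ^ 2) h
      rw [Real.sq_sqrt (by positivity)] at h2
      nlinarith [sq_nonneg ((1 + E) * x)]
    · intro h
      rw [h]
      rw [show (1 + E) ^ 2 * 0 ^ 2 + (E - 1) ^ 2 * y ^ 2 = ((E - 1) * y) ^ 2 by ring,
        Real.sqrt_sq hEy]
  have hpos : 0 < 2 * (Real.sqrt E * y) := by positivity
  refine ⟨?_, ?_, ?_⟩
  · rw [hdist, hl2]
    gcongr
  · intro h
    rw [hdist, hl2] at h
    have h2 : Real.arsinh (Real.sqrt ((1 + E) ^ 2 * x ^ 2 + (E - 1) ^ 2 * y ^ 2)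
        / (2 * (Real.sqrt E * y))) = Real.arsinh (((E - 1) * y) / (2 * (Real.sqrt E * y))) := by
      linarith
    have h3 := Real.arsinh_injective h2
    rw [div_eq_div_iff hpos.ne' hpos.ne'] at h3
    exact hkey2.1 (mul_right_cancel₀ hpos.ne' h3)
  · intro h
    have hx0 : x = 0 := h
    rw [hdist, hkey2.2 hx0]
    exact hl2.symm
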